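/- Let (Ω, 𝒫) be a probability space and let A_1 : Ω → ℝ^{I_1×R}, A_2 : Ω → ℝ^{I_2×R}, A_3 : Ω → ℝ^{I_3×R} be random matrices such that the 3R columns {a_r^(n) : n ∈ {1,2,3}, r ∈ Fin R} are mutually independent, each column a_r^(n) is zero mean with square-integrable entries, and E[a_r^(n)(i)·a_r^(n)(j)] = R_n(i,j) for covariance matrices R_n with θ_n := Tr(R_n). Define the random 3-way tensor X by X(i_1,i_2,i_3) = Σ_{r=1}^R A_1(i_1,r)·A_2(i_2,r)·A_3(i_3,r). Then for all i, j ∈ Fin I_1: E[Σ_{i_2,i_3} X(i,i_2,i_3)·X(j,i_2,i_3)] = R·θ_2·θ_3·R_1(i,j). -/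

import Mathlib

open MeasureTheory ProbabilityTheory Finset

def pick {I : Fin 3 → ℕ} (a : Fin (I 0)) (b : Fin (I 1)) (c : Fin (I 2)) : ∀ n : Fin 3, Fin (I n) :=
  fun n => match n with
  | ⟨0, _⟩ => a
  | ⟨1, _⟩ => b
  | ⟨2, _⟩ => c

example {I : Fin 3 → ℕ} (a : Fin (I 0)) (b : Fin (I 1)) (c : Fin (I 2)) :
    pick a b c 0 = a ∧ pick a b c 1 = b ∧ pick a b c 2 = c := ⟨rfl, rfl, rfl⟩

section Aux
variable {Ω : Type*} [MeasurableSpace Ω] {μ : Measure Ω}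

lemma aux_iIndepFun_ae_eq {ι : Type*} {β : ι → Type*} {m : ∀ i, MeasurableSpace (β i)}
    {f g : ∀ i, Ω → β i} (h : iIndepFun (m := m) f μ) (hfg : ∀ i, f i =ᵐ[μ] g i) :
    iIndepFun (m := m) g μ := by
  rw [iIndepFun_iff_measure_inter_preimage_eq_mul] at h ⊢
  intro S sets hsets
  have hae : ∀ k, (f k ⁻¹' sets k : Set Ω) =ᵐ[μ] (g k ⁻¹' sets k : Set Ω) := by
    intro k
    filter_upwards [hfg k] with ω hω
    show (f k ω ∈ sets k) = (g k ω ∈ sets k)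
    rw [hω]
  have h1 : (⋂ k ∈ S, f k ⁻¹' sets k) =ᵐ[μ] (⋂ k ∈ S, g k ⁻¹' sets k) := by
    have hb : ∀ᵐ ω ∂μ, ∀ k ∈ S, f k ω = g k ω :=
      (ae_ball_iff S.countable_toSet).2 fun k _ => hfg k
    filter_upwards [hb] with ω hω
    show (ω ∈ ⋂ k ∈ S, f k ⁻¹' sets k) = (ω ∈ ⋂ k ∈ S, g k ⁻¹' sets k)
    simp only [Set.mem_iInter, Set.mem_preimage, eq_iff_iff]
    exact ⟨fun h' k hk => (hω k hk) ▸ h' k hk, fun h' k hk => (hω k hk).symm ▸ h' k hk⟩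
  rw [← measure_congr h1, h S hsets]
  exact Finset.prod_congr rfl fun k _ => measure_congr (hae k)

lemma aux_integrable_prod [IsProbabilityMeasure μ] {ι : Type*} {Y : ι → Ω → ℝ}
    (h : iIndepFun Y μ) (hm : ∀ k, Measurable (Y k))
    (s : Finset ι) (hint : ∀ k ∈ s, Integrable (Y k) μ) :
    Integrable (fun ω => ∏ k ∈ s, Y k ω) μ := by
  classical
  induction s using Finset.induction_on with
  | empty => simp
  | @insert a s ha ih =>
    simp only [Finset.prod_insert ha]
    have h1 : IndepFun (Y a) (∏ k ∈ s, Y k) μ :=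
      (h.indepFun_finsetProd_of_notMem hm ha).symm
    have h2 : Integrable ((Y a) * (∏ k ∈ s, Y k)) μ := by
      apply h1.integrable_mul (hint a (Finset.mem_insert_self a s))
      have h3 := ih fun k hk => hint k (Finset.mem_insert_of_mem hk)
      simpa [Finset.prod_fn] using h3
    rw [Finset.prod_fn] at h2
    exact h2

lemma aux_integral_prod [IsProbabilityMeasure μ] {ι : Type*} {Y : ι → Ω → ℝ}
    (h : iIndepFun Y μ) (hm : ∀ k, Measurable (Y k))
    (s : Finset ι) :
    ∫ ω, ∏ k ∈ s, Y k ω ∂μ = ∏ k ∈ s, ∫ ω, Y k ω ∂μ := by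
  classical
  induction s using Finset.induction_on with
  | empty => simp
  | @insert a s ha ih =>
    simp only [Finset.prod_insert ha]
    have h1 : IndepFun (Y a) (∏ k ∈ s, Y k) μ :=
      (h.indepFun_finsetProd_of_notMem hm ha).symm
    have h2 := h1.integral_mul_eq_mul_integral (hm a).aestronglyMeasurable
      (by simpa [Finset.prod_fn] using
        (Finset.measurable_prod s fun k _ => hm k).aestronglyMeasurable)
    simp only [Finset.prod_fn, Pi.mul_apply] at h2 ⊢
    rw [h2, ih]
end Aux

@[simp] lemma pick_zero {I : Fin 3 → ℕ} (a : Fin (I 0)) (b : Fin (I 1)) (c : Fin (I 2)) :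
    pick a b c 0 = a := rfl
@[simp] lemma pick_one {I : Fin 3 → ℕ} (a : Fin (I 0)) (b : Fin (I 1)) (c : Fin (I 2)) :
    pick a b c 1 = b := rfl
@[simp] lemma pick_two {I : Fin 3 → ℕ} (a : Fin (I 0)) (b : Fin (I 1)) (c : Fin (I 2)) :
    pick a b c 2 = c := rfl

/-- One factor of the expanded PARAFAC product, as a function of the column index `p`. -/
def Wfun {R : ℕ} {I : Fin 3 → ℕ} {Ω : Type*} (A' : ∀ n : Fin 3, Ω → Fin (I n) → Fin R → ℝ)
    (i j : Fin (I 0)) (i2 : Fin (I 1)) (i3 : Fin (I 2)) (r s : Fin R)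
    (p : Fin 3 × Fin R) (ω : Ω) : ℝ :=
  (if p.2 = r then A' p.1 ω (pick i i2 i3 p.1) p.2 else 1) *
  (if p.2 = s then A' p.1 ω (pick j i2 i3 p.1) p.2 else 1)

/-- Kernel similarity matrix of a random 3-way PARAFAC tensor with mutually independent
zero-mean columns: `E[⟨mode-1 slice i, mode-1 slice j⟩] = R·θ₂·θ₃·R₁(i,j)`. -/
theorem kernel_similarity_mode_one (R : ℕ) (hR : 1 ≤ R)
    (I : Fin 3 → ℕ) (hI : ∀ n, 1 ≤ I n)
    {Ω : Type*} [MeasurableSpace Ω] (μ : Measure Ω) [IsProbabilityMeasure μ]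
    (A : ∀ n : Fin 3, Ω → Fin (I n) → Fin R → ℝ)
    (hindep : iIndepFun
      (m := fun p : Fin 3 × Fin R => (inferInstance : MeasurableSpace (Fin (I p.1) → ℝ)))
      (fun p ω i => A p.1 ω i p.2) μ)
    (hL2 : ∀ n i r, MemLp (fun ω => A n ω i r) 2 μ)
    (hmean : ∀ n i r, ∫ ω, A n ω i r ∂μ = 0)
    (Rn : ∀ n : Fin 3, Fin (I n) → Fin (I n) → ℝ)
    (hcov : ∀ n r i j, ∫ ω, A n ω i r * A n ω j r ∂μ = Rn n i j)
    (θ : Fin 3 → ℝ) (hθ : ∀ n, θ n = ∑ i : Fin (I n), Rn n i i)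
    (X : Ω → Fin (I 0) → Fin (I 1) → Fin (I 2) → ℝ)
    (hX : ∀ ω i1 i2 i3,
      X ω i1 i2 i3 = ∑ r : Fin R, A 0 ω i1 r * A 1 ω i2 r * A 2 ω i3 r) :
    ∀ i j : Fin (I 0),
      ∫ ω, (∑ i2 : Fin (I 1), ∑ i3 : Fin (I 2), X ω i i2 i3 * X ω j i2 i3) ∂μ =
        (R : ℝ) * θ 1 * θ 2 * Rn 0 i j := by
  intro i j
  classical
  -- measurable modification of the entries
  have hsm : ∀ n (i' : Fin (I n)) (r : Fin R), AEStronglyMeasurable (fun ω => A n ω i' r) μ :=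
    fun n i' r => (hL2 n i' r).1
  set A' : ∀ n : Fin 3, Ω → Fin (I n) → Fin R → ℝ :=
    fun n ω i' r => (hsm n i' r).mk _ ω with hA'
  have hmeas' : ∀ n (i' : Fin (I n)) (r : Fin R), Measurable fun ω => A' n ω i' r :=
    fun n i' r => (hsm n i' r).stronglyMeasurable_mk.measurable
  have hBae : ∀ n (i' : Fin (I n)) (r : Fin R),
      (fun ω => A n ω i' r) =ᵐ[μ] fun ω => A' n ω i' r :=
    fun n i' r => (hsm n i' r).ae_eq_mk
  have hindep' : iIndepFun
      (m := fun p : Fin 3 × Fin R => (inferInstance : MeasurableSpace (Fin (I p.1) → ℝ)))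
      (fun p ω i' => A' p.1 ω i' p.2) μ := by
    refine aux_iIndepFun_ae_eq hindep fun p => ?_
    have h1 : ∀ᵐ ω ∂μ, ∀ i' : Fin (I p.1), A p.1 ω i' p.2 = A' p.1 ω i' p.2 :=
      ae_all_iff.2 fun i' => hBae p.1 i' p.2
    filter_upwards [h1] with ω hω
    funext i'
    exact hω i'
  have hmean' : ∀ n (i' : Fin (I n)) (r : Fin R), ∫ ω, A' n ω i' r ∂μ = 0 := fun n i' r => by
    rw [← integral_congr_ae (hBae n i' r)]; exact hmean n i' r
  have hcov' : ∀ n (r : Fin R) (i' j' : Fin (I n)),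
      ∫ ω, A' n ω i' r * A' n ω j' r ∂μ = Rn n i' j' := fun n r i' j' => by
    rw [← hcov n r i' j']
    refine integral_congr_ae ?_
    filter_upwards [hBae n i' r, hBae n j' r] with ω h1 h2
    rw [h1, h2]
  have hL2' : ∀ n (i' : Fin (I n)) (r : Fin R), MemLp (fun ω => A' n ω i' r) 2 μ :=
    fun n i' r => (hL2 n i' r).ae_eq (hBae n i' r)
  -- independence / measurability / integrability of the factors
  have hWindep : ∀ i2 i3 (r s : Fin R),
      iIndepFun
        (Wfun A' i j i2 i3 r s) μ := by
    intro i2 i3 r s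
    have := hindep'.comp
      (fun p (v : Fin (I p.1) → ℝ) =>
        (if p.2 = r then v (pick i i2 i3 p.1) else 1) *
        (if p.2 = s then v (pick j i2 i3 p.1) else 1))
      (fun p => by
        apply Measurable.mul <;> split <;>
          first | exact measurable_pi_apply _ | exact measurable_const)
    exact this
  have hWmeas : ∀ i2 i3 (r s : Fin R) p, Measurable (Wfun A' i j i2 i3 r s p) := by
    intro i2 i3 r s p
    apply Measurable.mul <;> split <;>
      first | exact hmeas' _ _ _ | exact measurable_const
  have hWint : ∀ i2 i3 (r s : Fin R) p, Integrable (Wfun A' i j i2 i3 r s p) μ := by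
    intro i2 i3 r s p
    have hpqr : (1 : ENNReal) / 1 = 1 / 2 + 1 / 2 := by
      rw [ENNReal.add_halves, one_div, inv_one]
    unfold Wfun
    by_cases hr : p.2 = r <;> by_cases hs : p.2 = s
    · simp only [if_pos hr, if_pos hs]
      exact memLp_one_iff_integrable.1 ((hL2' p.1 (pick j i2 i3 p.1) p.2).smul
        (hL2' p.1 (pick i i2 i3 p.1) p.2))
    · simp only [if_pos hr, if_neg hs, mul_one]
      exact (hL2' p.1 (pick i i2 i3 p.1) p.2).integrable one_le_two
    · simp only [if_neg hr, if_pos hs, one_mul]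
      exact (hL2' p.1 (pick j i2 i3 p.1) p.2).integrable one_le_two
    · simp only [if_neg hr, if_neg hs, mul_one]
      exact integrable_const 1
  have hTint : ∀ i2 i3 (r s : Fin R),
      Integrable (fun ω =>
        ∏ p ∈ (univ : Finset (Fin 3)) ×ˢ ({r, s} : Finset (Fin R)),
          Wfun A' i j i2 i3 r s p ω) μ :=
    fun i2 i3 r s => aux_integrable_prod (hWindep i2 i3 r s) (hWmeas i2 i3 r s) _
      fun p _ => hWint i2 i3 r s p
  -- the product identity
  have hprod : ∀ i2 i3 (r s : Fin R) (ω : Ω),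
      ∏ p ∈ (univ : Finset (Fin 3)) ×ˢ ({r, s} : Finset (Fin R)),
          Wfun A' i j i2 i3 r s p ω
        = (A' 0 ω i r * A' 1 ω i2 r * A' 2 ω i3 r) *
          (A' 0 ω j s * A' 1 ω i2 s * A' 2 ω i3 s) := by
    intro i2 i3 r s ω
    rw [Finset.prod_product]
    by_cases hrs : r = s
    · subst hrs
      have hset : ({r, r} : Finset (Fin R)) = {r} := by simp
      rw [hset]
      simp only [Finset.prod_singleton, Wfun, eq_self_iff_true, if_true, ite_true]
      rw [Fin.prod_univ_three]
      simp only [pick_zero, pick_one, pick_two]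
      ring
    · have hsr : ¬(s = r) := fun h => hrs h.symm
      have hpair : ∀ f : Fin R → ℝ, ∏ t ∈ ({r, s} : Finset (Fin R)), f t = f r * f s :=
        fun f => Finset.prod_pair hrs
      simp only [hpair, Wfun, eq_self_iff_true, if_true, ite_true, if_neg hrs, if_neg hsr, mul_one, one_mul]
      rw [Fin.prod_univ_three]
      simp only [pick_zero, pick_one, pick_two]
      ring
  -- the value of each expectation
  have key : ∀ i2 i3 (r s : Fin R),
      ∫ ω, ∏ p ∈ (univ : Finset (Fin 3)) ×ˢ ({r, s} : Finset (Fin R)),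
          Wfun A' i j i2 i3 r s p ω ∂μ
        = if r = s then Rn 0 i j * Rn 1 i2 i2 * Rn 2 i3 i3 else 0 := by
    intro i2 i3 r s
    rw [aux_integral_prod (hWindep i2 i3 r s) (hWmeas i2 i3 r s)]
    by_cases hrs : r = s
    · subst hrs
      rw [if_pos rfl]
      have hset : ({r, r} : Finset (Fin R)) = {r} := by simp
      rw [Finset.prod_product, hset]
      simp only [Finset.prod_singleton]
      rw [Fin.prod_univ_three]
      have v : ∀ n : Fin 3,
          ∫ ω, Wfun A' i j i2 i3 r r (n, r) ω ∂μ
            = Rn n (pick i i2 i3 n) (pick j i2 i3 n) := by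
        intro n
        simp only [Wfun, eq_self_iff_true, if_true, ite_true]
        exact hcov' n r _ _
      rw [v 0, v 1, v 2]
      simp only [pick_zero, pick_one, pick_two]
    · rw [if_neg hrs]
      refine Finset.prod_eq_zero (i := ((0 : Fin 3), r))
        (Finset.mem_product.2 ⟨Finset.mem_univ (0 : Fin 3), Finset.mem_insert_self r {s}⟩) ?_
      have hW0 : ∀ ω : Ω, Wfun A' i j i2 i3 r s ((0 : Fin 3), r) ω = A' 0 ω i r := by
        intro ω
        simp only [Wfun, eq_self_iff_true, if_true, ite_true, if_neg hrs, mul_one, pick_zero]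
      simp only [hW0]
      exact hmean' 0 i r
  -- pointwise rewriting of the integrand
  have hptwise : ∀ᵐ ω ∂μ,
      (∑ i2 : Fin (I 1), ∑ i3 : Fin (I 2), X ω i i2 i3 * X ω j i2 i3)
        = ∑ i2 : Fin (I 1), ∑ i3 : Fin (I 2), ∑ r : Fin R, ∑ s : Fin R,
            ∏ p ∈ (univ : Finset (Fin 3)) ×ˢ ({r, s} : Finset (Fin R)),
              Wfun A' i j i2 i3 r s p ω := by
    have hae : ∀ᵐ ω ∂μ, ∀ n (i' : Fin (I n)) (r : Fin R), A n ω i' r = A' n ω i' r := by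
      rw [ae_all_iff]; intro n
      rw [ae_all_iff]; intro i'
      rw [ae_all_iff]; intro r
      exact hBae n i' r
    filter_upwards [hae] with ω hω
    simp only [hX, hω, Finset.sum_mul_sum, hprod]
  -- putting everything together
  rw [integral_congr_ae hptwise]
  rw [integral_finset_sum _ (fun i2 _ => integrable_finset_sum _ fun i3 _ =>
    integrable_finset_sum _ fun r _ => integrable_finset_sum _ fun s _ => hTint i2 i3 r s)]
  have step2 : ∀ i2 : Fin (I 1),
      ∫ ω, (∑ i3 : Fin (I 2), ∑ r : Fin R, ∑ s : Fin R,
          ∏ p ∈ (univ : Finset (Fin 3)) ×ˢ ({r, s} : Finset (Fin R)),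
            Wfun A' i j i2 i3 r s p ω) ∂μ
        = ∑ i3 : Fin (I 2), ∑ r : Fin R, ∑ s : Fin R,
            if r = s then Rn 0 i j * Rn 1 i2 i2 * Rn 2 i3 i3 else 0 := by
    intro i2
    rw [integral_finset_sum _ (fun i3 _ => integrable_finset_sum _ fun r _ =>
      integrable_finset_sum _ fun s _ => hTint i2 i3 r s)]
    refine Finset.sum_congr rfl fun i3 _ => ?_
    rw [integral_finset_sum _ (fun r _ => integrable_finset_sum _ fun s _ => hTint i2 i3 r s)]
    refine Finset.sum_congr rfl fun r _ => ?_
    rw [integral_finset_sum _ (fun s _ => hTint i2 i3 r s)]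
    exact Finset.sum_congr rfl fun s _ => key i2 i3 r s
  simp only [step2]
  simp only [Finset.sum_ite_eq, Finset.mem_univ, if_true, Finset.sum_const,
    Finset.card_univ, Fintype.card_fin, nsmul_eq_mul]
  have expand :
      ((R : ℝ) * Rn 0 i j) * ((∑ i2 : Fin (I 1), Rn 1 i2 i2) * (∑ i3 : Fin (I 2), Rn 2 i3 i3))
        = ∑ i2 : Fin (I 1), ∑ i3 : Fin (I 2),
            (R : ℝ) * (Rn 0 i j * Rn 1 i2 i2 * Rn 2 i3 i3) := by
    rw [Finset.sum_mul_sum, Finset.mul_sum]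
    refine Finset.sum_congr rfl fun i2 _ => ?_
    rw [Finset.mul_sum]
    exact Finset.sum_congr rfl fun i3 _ => by ring
  rw [← expand, hθ 1, hθ 2]
  ring
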